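/- The rotate-and-sum procedure correctly sums strided groups: let N = 2^t, m = 2^s with s ≤ t, and let c ∈ ℝ^N. Define the sequence c^{(0)} = c and c^{(l+1)}_j = c^{(l)}_j + c^{(l)}_{(j + m·2^l) mod N}. Then after t − s steps, for each j < m, c^{(t−s)}_j = Σ_{q=0}^{N/m − 1} c_{j + q·m}. -/
import Mathlib


/-- Rotate-and-sum correctness: with `N = 2^t` slots and stride `m = 2^s`, after
`t − s` rotate-and-add steps each of the first `m` slots holds the sum of its
residue class modulo `m`. -/
theorem stmt_13 (t s : ℕ) (hst : s ≤ t) (c : Fin (2 ^ t) → ℝ)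
    (cs : ℕ → Fin (2 ^ t) → ℝ) (h0 : cs 0 = c)
    (hstep : ∀ (l : ℕ) (j : Fin (2 ^ t)),
      cs (l + 1) j = cs l j +
        cs l ⟨((j : ℕ) + 2 ^ s * 2 ^ l) % 2 ^ t, Nat.mod_lt _ (Nat.two_pow_pos t)⟩) :
    ∀ j : Fin (2 ^ t), (j : ℕ) < 2 ^ s →
      cs (t - s) j = ∑ q : Fin (2 ^ t / 2 ^ s),
        c ⟨((j : ℕ) + (q : ℕ) * 2 ^ s) % 2 ^ t, Nat.mod_lt _ (Nat.two_pow_pos t)⟩ := by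
  have key : ∀ l : ℕ, ∀ j : Fin (2 ^ t),
      cs l j = ∑ q ∈ Finset.range (2 ^ l),
        c ⟨((j : ℕ) + q * 2 ^ s) % 2 ^ t, Nat.mod_lt _ (Nat.two_pow_pos t)⟩ := by
    intro l
    induction l with
    | zero =>
      intro j
      simp only [pow_zero, Finset.sum_range_one, zero_mul, add_zero, h0]
      congr 1
      exact Fin.ext (Nat.mod_eq_of_lt j.isLt).symm
    | succ l ih =>
      intro j
      rw [hstep, ih, ih]
      have hsplit : 2 ^ (l + 1) = 2 ^ l + 2 ^ l := by rw [pow_succ, mul_two]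
      rw [hsplit, Finset.sum_range_add]
      congr 1
      apply Finset.sum_congr rfl
      intro q hq
      congr 1
      apply Fin.ext
      show (((j : ℕ) + 2 ^ s * 2 ^ l) % 2 ^ t + q * 2 ^ s) % 2 ^ t
          = ((j : ℕ) + (2 ^ l + q) * 2 ^ s) % 2 ^ t
      rw [Nat.mod_add_mod]
      ring_nf
  intro j _
  have hdiv : 2 ^ t / 2 ^ s = 2 ^ (t - s) := Nat.pow_div hst (by norm_num)
  rw [key, hdiv.symm]
  exact (Fin.sum_univ_eq_sum_range
    (fun q : ℕ => c ⟨((j : ℕ) + q * 2 ^ s) % 2 ^ t, Nat.mod_lt _ (Nat.two_pow_pos t)⟩) _).symm
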